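/- Let G be a topological group and let H be a closed subgroup. Then the following are equivalent: (i) the translation action of G on the coset space G/H is distal; (ii) the trivial coset H is a distal point for the translation action of H on G/H; (iii) H = ⋂_{U ∈ 𝒰} HUH, where 𝒰 is a base of identity neighbourhoods in G. -/

import Mathlib

open Topology Pointwise

private lemma keynes_claimC {G : Type*} [Group G] [TopologicalSpace G] [IsTopologicalGroup G]
    (H : Subgroup G) (hH : IsClosed (H : Set G)) (y : G) :
    (∃ z : G ⧸ H, (z, z) ∈ closure {p : (G ⧸ H) × (G ⧸ H) |
        ∃ h ∈ H, p = (QuotientGroup.mk (h * 1), QuotientGroup.mk (h * y))}) ↔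
      ∀ U ∈ 𝓝 (1 : G), y ∈ (H : Set G) * U * (H : Set G) := by
  set S : Set ((G ⧸ H) × (G ⧸ H)) := {p | ∃ h ∈ H, p = (QuotientGroup.mk (h * 1), QuotientGroup.mk (h * y))} with hS
  have h1 : IsClosed ({(QuotientGroup.mk 1 : G ⧸ H)} : Set (G ⧸ H)) := by
    rw [← (QuotientGroup.isQuotientMap_mk H).isClosed_preimage]
    convert hH using 1
    ext g
    simp [QuotientGroup.eq]
  constructor
  · rintro ⟨z, hz⟩
    -- first, z = mk 1
    have hsub : S ⊆ ({(QuotientGroup.mk 1 : G ⧸ H)} : Set (G ⧸ H)) ×ˢ Set.univ := by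
      rintro p ⟨h, hh, rfl⟩
      refine ⟨?_, trivial⟩
      simp only [Set.mem_singleton_iff]
      rw [QuotientGroup.eq]
      simpa using H.inv_mem hh
    have hz1 : z = QuotientGroup.mk 1 := by
      have := (closure_mono hsub) hz
      rw [closure_eq_iff_isClosed.mpr (h1.prod isClosed_univ)] at this
      exact this.1
    subst hz1
    intro U hU
    have hW : QuotientGroup.mk '' U ∈ 𝓝 ((1:G) : G ⧸ H) := by
      rw [QuotientGroup.nhds_eq H 1, Filter.mem_map]
      exact Filter.mem_of_superset hU (Set.subset_preimage_image _ _)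
    have hnhds := (mem_closure_iff_nhds.mp hz) _ (prod_mem_nhds hW hW)
    obtain ⟨p, ⟨hp1, hp2⟩, h, hh, rfl⟩ := hnhds
    obtain ⟨u, hu, huy⟩ := hp2
    -- huy : mk u = mk (h * y)
    have : u⁻¹ * (h * y) ∈ H := (QuotientGroup.eq).mp huy
    refine ⟨h⁻¹ * u, ⟨h⁻¹, H.inv_mem hh, u, hu, rfl⟩, u⁻¹ * (h * y), this, by group⟩
  · intro hall
    refine ⟨QuotientGroup.mk 1, mem_closure_iff_nhds.mpr fun t ht => ?_⟩
    rw [mem_nhds_prod_iff] at ht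
    obtain ⟨W₁, hW₁, W₂, hW₂, hWt⟩ := ht
    have hU : QuotientGroup.mk ⁻¹' W₂ ∈ 𝓝 (1:G) := by
      rw [QuotientGroup.nhds_eq H 1, Filter.mem_map] at hW₂; exact hW₂
    obtain ⟨a, ⟨h₁, hh₁, u, hu, rfl⟩, h₂, hh₂, hy⟩ := hall _ hU
    refine ⟨(QuotientGroup.mk (h₁⁻¹ * 1), QuotientGroup.mk (h₁⁻¹ * y)),
      hWt ⟨?_, ?_⟩, h₁⁻¹, H.inv_mem hh₁, rfl⟩
    · have : (QuotientGroup.mk (h₁⁻¹ * 1) : G ⧸ H) = QuotientGroup.mk 1 := by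
        rw [QuotientGroup.eq]; simpa using hh₁
      rw [this]; exact mem_of_mem_nhds hW₁
    · have : (QuotientGroup.mk (h₁⁻¹ * y) : G ⧸ H) = QuotientGroup.mk u := by
        rw [QuotientGroup.eq, ← hy]
        have hgr : (h₁⁻¹ * (h₁ * u * h₂))⁻¹ * u = h₂⁻¹ := by group
        rw [hgr]; exact H.inv_mem hh₂
      rw [this]; exact hu

theorem codistal_tfae {G : Type*} [Group G] [TopologicalSpace G] [IsTopologicalGroup G]
    (H : Subgroup G) (hH : IsClosed (H : Set G)) :
    ((∀ x y : G, (QuotientGroup.mk x : G ⧸ H) ≠ QuotientGroup.mk y →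
        ¬ ∃ z : G ⧸ H, (z, z) ∈ closure {p : (G ⧸ H) × (G ⧸ H) |
          ∃ g : G, p = (QuotientGroup.mk (g * x), QuotientGroup.mk (g * y))}) ↔
      (∀ y : G, (QuotientGroup.mk y : G ⧸ H) ≠ QuotientGroup.mk (1 : G) →
        ¬ ∃ z : G ⧸ H, (z, z) ∈ closure {p : (G ⧸ H) × (G ⧸ H) |
          ∃ h ∈ H, p = (QuotientGroup.mk (h * 1), QuotientGroup.mk (h * y))})) ∧
    ((∀ y : G, (QuotientGroup.mk y : G ⧸ H) ≠ QuotientGroup.mk (1 : G) →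
        ¬ ∃ z : G ⧸ H, (z, z) ∈ closure {p : (G ⧸ H) × (G ⧸ H) |
          ∃ h ∈ H, p = (QuotientGroup.mk (h * 1), QuotientGroup.mk (h * y))}) ↔
      (H : Set G) = ⋂ U ∈ 𝓝 (1 : G), (H : Set G) * U * (H : Set G)) := by
  -- key : (ii) means exactly: any g in every HUH lies in H
  have key : ∀ (_ : (∀ y : G, (QuotientGroup.mk y : G ⧸ H) ≠ QuotientGroup.mk (1 : G) →
        ¬ ∃ z : G ⧸ H, (z, z) ∈ closure {p : (G ⧸ H) × (G ⧸ H) |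
          ∃ h ∈ H, p = (QuotientGroup.mk (h * 1), QuotientGroup.mk (h * y))})),
      ∀ g : G, (∀ U ∈ 𝓝 (1:G), g ∈ (H : Set G) * U * (H : Set G)) → g ∈ H := by
    intro hii g hg
    by_contra hgH
    have hne : (QuotientGroup.mk g : G ⧸ H) ≠ QuotientGroup.mk 1 := by
      rw [Ne, QuotientGroup.eq]
      simpa using hgH
    exact hii g hne ((keynes_claimC H hH g).mpr hg)
  constructor
  · constructor
    · -- (i) → (ii)
      intro hi y hy ⟨z, hz⟩
      refine hi 1 y (fun h => hy h.symm) ⟨z, ?_⟩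
      refine closure_mono ?_ hz
      rintro p ⟨h, hh, rfl⟩
      exact ⟨h, rfl⟩
    · -- (ii) → (i)
      intro hii x y hxy ⟨z, hz⟩
      obtain ⟨w, rfl⟩ := QuotientGroup.mk_surjective z
      have hmem : x⁻¹ * y ∈ H := by
        refine key hii _ fun V hV => ?_
        -- choose U with  w⁻¹ * (a⁻¹ * b) * w ∈ V for a, b ∈ U
        have hcont : Continuous fun q : G × G => w⁻¹ * (q.1⁻¹ * q.2) * w := by continuity
        have hpre : (fun q : G × G => w⁻¹ * (q.1⁻¹ * q.2) * w) ⁻¹' V ∈ 𝓝 ((1:G), (1:G)) := by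
          apply hcont.continuousAt.preimage_mem_nhds
          simp only [mul_one, inv_mul_cancel, one_mul, mul_inv_cancel]; simpa using hV
        rw [mem_nhds_prod_iff] at hpre
        obtain ⟨U₁, hU₁, U₂, hU₂, hUV⟩ := hpre
        set U := U₁ ∩ U₂ with hUdef
        have hU : U ∈ 𝓝 (1:G) := Filter.inter_mem hU₁ hU₂
        -- neighborhood of mk w
        have hsUw : (fun u => u * w) '' U ∈ 𝓝 w := by
          have : Filter.map (fun u => u * w) (𝓝 (1:G)) = 𝓝 w := by
            simpa using map_mul_right_nhds_one (x := w)
          rw [← this, Filter.mem_map]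
          exact Filter.mem_of_superset hU (Set.subset_preimage_image _ _)
        have hW : QuotientGroup.mk '' ((fun u => u * w) '' U) ∈ 𝓝 ((w:G) : G ⧸ H) := by
          rw [QuotientGroup.nhds_eq H w, Filter.mem_map]
          exact Filter.mem_of_superset hsUw (Set.subset_preimage_image _ _)
        have hnhds := (mem_closure_iff_nhds.mp hz) _ (prod_mem_nhds hW hW)
        obtain ⟨p, ⟨hp1, hp2⟩, g, rfl⟩ := hnhds
        obtain ⟨a, ⟨u₁, hu₁, rfl⟩, ha⟩ := hp1
        obtain ⟨b, ⟨u₂, hu₂, rfl⟩, hb⟩ := hp2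
        have h₁ : (u₁ * w)⁻¹ * (g * x) ∈ H := (QuotientGroup.eq).mp ha
        have h₂ : (u₂ * w)⁻¹ * (g * y) ∈ H := (QuotientGroup.eq).mp hb
        have hmid : w⁻¹ * (u₁⁻¹ * u₂) * w ∈ V := hUV (Set.mk_mem_prod hu₁.1 hu₂.2)
        refine ⟨((u₁ * w)⁻¹ * (g * x))⁻¹ * (w⁻¹ * (u₁⁻¹ * u₂) * w),
          ⟨((u₁ * w)⁻¹ * (g * x))⁻¹, H.inv_mem h₁, _, hmid, rfl⟩,
          (u₂ * w)⁻¹ * (g * y), h₂, by group⟩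
      exact hxy ((QuotientGroup.eq).mpr hmem)
  · constructor
    · -- (ii) → (iii)
      intro hii
      apply Set.Subset.antisymm
      · intro h hh
        refine Set.mem_iInter₂.mpr fun U hU => ?_
        exact ⟨h * 1, ⟨h, hh, 1, mem_of_mem_nhds hU, rfl⟩, 1, H.one_mem, by simp⟩
      · intro g hg
        exact key hii g (Set.mem_iInter₂.mp hg)
    · -- (iii) → (ii)
      intro hiii y hy ⟨z, hz⟩
      have : y ∈ (H : Set G) := by
        rw [hiii]
        exact Set.mem_iInter₂.mpr ((keynes_claimC H hH y).mp ⟨z, hz⟩)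
      exact hy ((QuotientGroup.eq).mpr (by simpa using H.inv_mem this))
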